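/- Let α ∈ (0,2). There exists a constant C > 0, depending only on α, such that for every h > 0, every n ∈ {0,1}, and all integers i,j ≥ 1 with i+j ≥ 3, writing ξ_i = ih, η_j = jh, I_{ij} = [ih,(i+1)h]×[jh,(j+1)h], and letting Θ^{(1,n)}_{I_{ab}} be built from the weight w(ξ,η) = (ξ²+η²)^{−α/2} on the rectangle I_{ab}, one has | Θ^{(1,n)}_{I_{(i−1)j}}(ξ_i, η_j) − Θ^{(1,n)}_{I_{ij}}(ξ_i, η_j) | ≤ C h^{4+n} (ξ_i² + η_j²)^{−(1+α)/2}. -/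

import Mathlib

open MeasureTheory Set intervalIntegral

/-- One summand of the generalized Peano kernel `Θ`. -/
noncomputable def Kterm (w : ℝ × ℝ → ℝ) (s t : ℝ) (m n : ℕ) (x y : ℝ) : ℝ :=
  ∫ η in t..y, ∫ ξ in s..x,
    w (ξ, η) * (x - ξ) ^ m * (y - η) ^ n / (m.factorial * n.factorial)

/-- The generalized Peano kernel
`Θ^{(m,n)}_{[a,b]×[c,d]}(x,y) = Σ_{(s,t) ∈ S} ∫_t^y ∫_s^x w(ξ,η) (x-ξ)^m (y-η)^n/(m! n!) dξ dη`,
where `S = {(a,c), (a,d), (b,c), (b,d)}`. -/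
noncomputable def Theta (w : ℝ × ℝ → ℝ) (a b c d : ℝ) (m n : ℕ) (x y : ℝ) : ℝ :=
  Kterm w a c m n x y + Kterm w a d m n x y + Kterm w b c m n x y + Kterm w b d m n x y

/-- The partial derivative `∂_{m,n} f = ∂_x^m ∂_y^n f` of a function of two real variables. -/
noncomputable def pd (m n : ℕ) (f : ℝ × ℝ → ℝ) (p : ℝ × ℝ) : ℝ :=
  deriv^[m] (fun x => deriv^[n] (fun y => f (x, y)) p.2) p.1

/-- Lipschitz estimate for `ξ ↦ (ξ²+η²)^{-α/2}` on an interval of nonnegative reals on which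
`ξ²+η² ≥ S₀`. -/
lemma lipA {α : ℝ} (hα : 0 < α) {A B η S₀ : ℝ} (hA : 0 ≤ A) (hS₀ : 0 < S₀)
    (hS : ∀ ξ ∈ Icc A B, S₀ ≤ ξ ^ 2 + η ^ 2) {ξ₀ ξ₁ : ℝ}
    (h₀ : ξ₀ ∈ Icc A B) (h₁ : ξ₁ ∈ Icc A B) :
    |(ξ₁ ^ 2 + η ^ 2) ^ (-α / 2) - (ξ₀ ^ 2 + η ^ 2) ^ (-α / 2)|
      ≤ α * S₀ ^ (-(1 + α) / 2) * |ξ₁ - ξ₀| := by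
  have key := Convex.norm_image_sub_le_of_norm_hasDerivWithin_le
    (f := fun ξ : ℝ => (ξ ^ 2 + η ^ 2) ^ (-α / 2))
    (f' := fun ξ : ℝ => (2 * ξ) * (-α / 2) * (ξ ^ 2 + η ^ 2) ^ (-α / 2 - 1))
    (C := α * S₀ ^ (-(1 + α) / 2)) (s := Icc A B) ?hd ?hb (convex_Icc A B) h₀ h₁
  · simpa [Real.norm_eq_abs] using key
  case hd =>
    intro ξ hξ
    have h1 : (0:ℝ) < ξ ^ 2 + η ^ 2 := lt_of_lt_of_le hS₀ (hS ξ hξ)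
    have hb : HasDerivAt (fun ξ : ℝ => ξ ^ 2 + η ^ 2) (2 * ξ) ξ := by
      simpa using (hasDerivAt_pow 2 ξ).add_const (η ^ 2)
    exact (hb.rpow_const (Or.inl h1.ne')).hasDerivWithinAt
  case hb =>
    intro ξ hξ
    have hS' : (0:ℝ) < ξ ^ 2 + η ^ 2 := lt_of_lt_of_le hS₀ (hS ξ hξ)
    have hξ0 : 0 ≤ ξ := le_trans hA hξ.1
    have hP : (0:ℝ) ≤ (ξ ^ 2 + η ^ 2) ^ (-α / 2 - 1) := Real.rpow_nonneg hS'.le _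
    have hξle : ξ ≤ (ξ ^ 2 + η ^ 2) ^ ((1:ℝ)/2) := by
      rw [← Real.sqrt_eq_rpow]
      calc ξ = Real.sqrt (ξ ^ 2) := (Real.sqrt_sq hξ0).symm
        _ ≤ Real.sqrt (ξ ^ 2 + η ^ 2) := Real.sqrt_le_sqrt (by nlinarith [sq_nonneg η])
    have e1 : (ξ ^ 2 + η ^ 2) ^ ((1:ℝ)/2) * (ξ ^ 2 + η ^ 2) ^ (-α / 2 - 1)
        = (ξ ^ 2 + η ^ 2) ^ (-(1 + α) / 2) := by
      rw [← Real.rpow_add hS']; congr 1; ring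
    have e2 : (ξ ^ 2 + η ^ 2) ^ (-(1 + α) / 2) ≤ S₀ ^ (-(1 + α) / 2) :=
      Real.rpow_le_rpow_of_nonpos hS₀ (hS ξ hξ) (by linarith)
    have lhs : ‖(2 * ξ) * (-α / 2) * (ξ ^ 2 + η ^ 2) ^ (-α / 2 - 1)‖
        = α * (ξ * (ξ ^ 2 + η ^ 2) ^ (-α / 2 - 1)) := by
      rw [Real.norm_eq_abs, abs_mul, abs_mul,
        abs_of_nonneg (by linarith : (0:ℝ) ≤ 2 * ξ),
        abs_of_nonpos (by linarith : -α / 2 ≤ 0), abs_of_nonneg hP]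
      ring
    rw [lhs]
    calc α * (ξ * (ξ ^ 2 + η ^ 2) ^ (-α / 2 - 1))
        ≤ α * ((ξ ^ 2 + η ^ 2) ^ ((1:ℝ)/2) * (ξ ^ 2 + η ^ 2) ^ (-α / 2 - 1)) :=
          mul_le_mul_of_nonneg_left (mul_le_mul_of_nonneg_right hξle hP) hα.le
      _ = (ξ ^ 2 + η ^ 2) ^ (-(1 + α) / 2) * α := by rw [e1]; ring
      _ ≤ α * S₀ ^ (-(1 + α) / 2) := by
          rw [mul_comm]; exact mul_le_mul_of_nonneg_left e2 hα.le

set_option maxHeartbeats 1000000 in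
/-- **Difference of Peano kernels on adjacent grid cells.** For the weight
`w(ξ,η) = (ξ²+η²)^{-α/2}` with `α ∈ (0,2)`, there is `C > 0` depending only on `α` such
that for every mesh size `h > 0`, every `n ∈ {0,1}`, and all `i, j ≥ 1` with `i + j ≥ 3`,
`|Θ^{(1,n)}_{I_{(i-1)j}}(ξ_i, η_j) - Θ^{(1,n)}_{I_{ij}}(ξ_i, η_j)| ≤ C h^{4+n} (ξ_i²+η_j²)^{-(1+α)/2}`. -/
theorem theta_adjacent_difference_bound (α : ℝ) (hα0 : 0 < α) (hα2 : α < 2) :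
    ∃ C : ℝ, 0 < C ∧ ∀ h : ℝ, 0 < h → ∀ n : ℕ, n ≤ 1 →
      ∀ i j : ℕ, 1 ≤ i → 1 ≤ j → 3 ≤ i + j →
        |Theta (fun ξ : ℝ × ℝ => (ξ.1 ^ 2 + ξ.2 ^ 2) ^ (-α / 2))
              (((i : ℝ) - 1) * h) ((i : ℝ) * h) ((j : ℝ) * h) (((j : ℝ) + 1) * h)
              1 n ((i : ℝ) * h) ((j : ℝ) * h)
          - Theta (fun ξ : ℝ × ℝ => (ξ.1 ^ 2 + ξ.2 ^ 2) ^ (-α / 2))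
              ((i : ℝ) * h) (((i : ℝ) + 1) * h) ((j : ℝ) * h) (((j : ℝ) + 1) * h)
              1 n ((i : ℝ) * h) ((j : ℝ) * h)|
          ≤ C * h ^ (4 + n) * (((i : ℝ) * h) ^ 2 + ((j : ℝ) * h) ^ 2) ^ (-(1 + α) / 2) := by
  refine ⟨2 * α * (5:ℝ) ^ ((1 + α) / 2), by positivity, ?_⟩
  intro h hh n hn i j hi hj hij
  set w : ℝ × ℝ → ℝ := fun ξ : ℝ × ℝ => (ξ.1 ^ 2 + ξ.2 ^ 2) ^ (-α / 2) with hw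
  set x : ℝ := (i : ℝ) * h with hx
  set y : ℝ := (j : ℝ) * h with hy
  set dd : ℝ := ((j : ℝ) + 1) * h with hdd
  set s₁ : ℝ := ((i : ℝ) - 1) * h with hs₁
  set s₂ : ℝ := ((i : ℝ) + 1) * h with hs₂
  have hi1 : (1:ℝ) ≤ (i:ℝ) := by exact_mod_cast hi
  have hj1 : (1:ℝ) ≤ (j:ℝ) := by exact_mod_cast hj
  have hxpos : 0 < x := by rw [hx]; nlinarith
  have hypos : 0 < y := by rw [hy]; nlinarith
  have e₁ : s₁ = x - h := by rw [hs₁, hx]; ring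
  have e₂ : s₂ = x + h := by rw [hs₂, hx]; ring
  have eh : dd - y = h := by rw [hdd, hy]; ring
  have hyd : y < dd := by nlinarith
  have hs₁0 : 0 ≤ s₁ := by rw [hs₁]; nlinarith
  set R : ℝ := x ^ 2 + y ^ 2 with hR
  have hRpos : 0 < R := by positivity
  set S₀ : ℝ := R / 5 with hS₀def
  have hS₀ : 0 < S₀ := by positivity
  set M : ℝ := α * S₀ ^ (-(1 + α) / 2) with hM
  have hMpos : 0 < M := by positivity
  -- lower bound for `ξ² + η²` on the relevant rectangle
  have hSmin : ∀ η : ℝ, y ≤ η → ∀ ξ ∈ Icc s₁ s₂, S₀ ≤ ξ ^ 2 + η ^ 2 := by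
    intro η hη ξ hξ
    have h1 : s₁ ≤ ξ := hξ.1
    have h2 : s₁ ^ 2 ≤ ξ ^ 2 := by nlinarith
    have h3 : y ^ 2 ≤ η ^ 2 := by nlinarith
    have key : (i:ℝ) ^ 2 + (j:ℝ) ^ 2 ≤ 5 * (((i:ℝ) - 1) ^ 2 + (j:ℝ) ^ 2) := by
      nlinarith [sq_nonneg (2 * (i:ℝ) - 3), mul_le_mul hj1 hj1 (by norm_num) (by linarith), hi1]
    have expand : s₁ ^ 2 + y ^ 2 = (((i:ℝ) - 1) ^ 2 + (j:ℝ) ^ 2) * h ^ 2 := by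
      rw [hs₁, hy]; ring
    have expand2 : R = ((i:ℝ) ^ 2 + (j:ℝ) ^ 2) * h ^ 2 := by rw [hR, hx, hy]; ring
    have h4 : S₀ ≤ s₁ ^ 2 + y ^ 2 := by
      rw [hS₀def, expand2, expand]
      have := mul_le_mul_of_nonneg_right key (sq_nonneg h)
      linarith
    linarith
  -- continuity of the weight in `ξ` for fixed nonzero `η`
  have wcont : ∀ η : ℝ, η ≠ 0 → Continuous fun ξ : ℝ => w (ξ, η) := by
    intro η hη
    simp only [hw]
    exact ((continuous_pow 2).add continuous_const).rpow_const
      (fun ξ => Or.inl (by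
        show ξ ^ 2 + η ^ 2 ≠ 0
        have h2 := pow_pos (abs_pos.mpr hη) 2
        rw [sq_abs] at h2
        exact ne_of_gt (by nlinarith [sq_nonneg ξ])))
  have Fcont : ∀ η : ℝ, η ≠ 0 → Continuous fun ξ : ℝ =>
      w (ξ, η) * (x - ξ) ^ 1 * (y - η) ^ n / ((Nat.factorial 1 : ℝ) * (Nat.factorial n : ℝ)) := by
    intro η hη
    exact (((wcont η hη).mul ((continuous_const.sub continuous_id).pow 1)).mul
      continuous_const).div_const _
  -- the degenerate Kterms vanish
  have K0t : ∀ s : ℝ, Kterm w s y 1 n x y = 0 := by intro s; simp [Kterm]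
  have K0s : ∀ t : ℝ, Kterm w x t 1 n x y = 0 := by intro t; simp [Kterm]
  have T1 : Theta w s₁ x y dd 1 n x y = Kterm w s₁ dd 1 n x y := by
    simp [Theta, K0t, K0s]
  have T2 : Theta w x s₂ y dd 1 n x y = Kterm w s₂ dd 1 n x y := by
    simp [Theta, K0t, K0s]
  rw [T1, T2]
  -- interval integrability in `η` of the inner slice integrals, via a clamped weight
  set cl : ℝ → ℝ := fun η => max y (min η dd) with hcl
  have clcont : Continuous cl := continuous_const.max (continuous_id.min continuous_const)
  have clpos : ∀ η : ℝ, 0 < cl η := fun η => lt_of_lt_of_le hypos (le_max_left _ _)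
  have cleq : ∀ η ∈ uIcc dd y, cl η = η := by
    intro η hη
    rw [uIcc_comm, uIcc_of_le hyd.le] at hη
    rw [hcl]
    simp only [min_eq_left hη.2, max_eq_right hη.1]
  have gInt : ∀ s : ℝ, IntervalIntegrable (fun η : ℝ => ∫ ξ in s..x,
      w (ξ, η) * (x - ξ) ^ 1 * (y - η) ^ n / ((Nat.factorial 1 : ℝ) * (Nat.factorial n : ℝ)))
      volume dd y := by
    intro s
    apply ContinuousOn.intervalIntegrable
    have hGc : Continuous fun η : ℝ => ∫ ξ in s..x,
        w (ξ, cl η) * (x - ξ) ^ 1 * (y - cl η) ^ n /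
          ((Nat.factorial 1 : ℝ) * (Nat.factorial n : ℝ)) := by
      apply continuous_parametric_intervalIntegral_of_continuous' (μ := volume)
      have hbase : Continuous fun p : ℝ × ℝ => p.2 ^ 2 + (cl p.1) ^ 2 :=
        (continuous_snd.pow 2).add ((clcont.comp continuous_fst).pow 2)
      have h1 : Continuous fun p : ℝ × ℝ => (p.2 ^ 2 + (cl p.1) ^ 2) ^ (-α / 2) :=
        hbase.rpow_const (fun p => Or.inl (by have := (clpos p.1).ne'; positivity))
      exact ((h1.mul ((continuous_const.sub continuous_snd).pow 1)).mul
        ((continuous_const.sub (clcont.comp continuous_fst)).pow n)).div_const _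
    exact hGc.continuousOn.congr (fun η hη => by simp only [hw]; rw [cleq η hη])
  simp only [Kterm]
  rw [← intervalIntegral.integral_sub (gInt s₁) (gInt s₂)]
  -- pointwise bound for the integrand of the outer integral
  have hbound : ∀ η ∈ Set.uIoc dd y,
      ‖(∫ ξ in s₁..x, w (ξ, η) * (x - ξ) ^ 1 * (y - η) ^ n /
          ((Nat.factorial 1 : ℝ) * (Nat.factorial n : ℝ)))
        - ∫ ξ in s₂..x, w (ξ, η) * (x - ξ) ^ 1 * (y - η) ^ n /
          ((Nat.factorial 1 : ℝ) * (Nat.factorial n : ℝ))‖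
        ≤ 2 * M * h ^ (3 + n) := by
    intro η hη
    rw [uIoc_comm, uIoc_of_le hyd.le] at hη
    have hηy : y < η := hη.1
    have hηd : η ≤ dd := hη.2
    have hηpos : 0 < η := hypos.trans hηy
    have hI : ∀ a b : ℝ, IntervalIntegrable (fun ξ : ℝ =>
        w (ξ, η) * (x - ξ) ^ 1 * (y - η) ^ n /
          ((Nat.factorial 1 : ℝ) * (Nat.factorial n : ℝ))) volume a b :=
      fun a b => (Fcont η hηpos.ne').intervalIntegrable a b
    have step1 : (∫ ξ in s₁..x, w (ξ, η) * (x - ξ) ^ 1 * (y - η) ^ n /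
          ((Nat.factorial 1 : ℝ) * (Nat.factorial n : ℝ)))
        - (∫ ξ in s₂..x, w (ξ, η) * (x - ξ) ^ 1 * (y - η) ^ n /
          ((Nat.factorial 1 : ℝ) * (Nat.factorial n : ℝ)))
        = ∫ ξ in s₁..s₂, w (ξ, η) * (x - ξ) ^ 1 * (y - η) ^ n /
          ((Nat.factorial 1 : ℝ) * (Nat.factorial n : ℝ)) := by
      have := intervalIntegral.integral_add_adjacent_intervals (hI s₁ s₂) (hI s₂ x)
      linarith
    rw [step1]
    have hwc : Continuous fun ξ : ℝ => w (ξ, η) := wcont η hηpos.ne'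
    -- split off the odd part, which integrates to zero
    have split : (∫ ξ in s₁..s₂, w (ξ, η) * (x - ξ) ^ 1 * (y - η) ^ n /
          ((Nat.factorial 1 : ℝ) * (Nat.factorial n : ℝ)))
        = (∫ ξ in s₁..s₂, ((y - η) ^ n / ((Nat.factorial 1 : ℝ) * (Nat.factorial n : ℝ)))
              * ((w (ξ, η) - w (x, η)) * (x - ξ)))
          + (w (x, η) * (y - η) ^ n / ((Nat.factorial 1 : ℝ) * (Nat.factorial n : ℝ)))
              * ∫ ξ in s₁..s₂, (x - ξ) := by
      rw [← intervalIntegral.integral_const_mul, ← intervalIntegral.integral_add]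
      · exact intervalIntegral.integral_congr (fun ξ _ => by ring)
      · exact (continuous_const.mul ((hwc.sub continuous_const).mul
          (continuous_const.sub continuous_id))).intervalIntegrable _ _
      · exact (continuous_const.mul
          (continuous_const.sub continuous_id)).intervalIntegrable _ _
    have hzero : (∫ ξ in s₁..s₂, (x - ξ)) = 0 := by
      rw [intervalIntegral.integral_sub intervalIntegrable_const
        intervalIntegral.intervalIntegrable_id, intervalIntegral.integral_const, integral_id, e₁, e₂,
        smul_eq_mul]
      ring
    rw [split, hzero, mul_zero, add_zero]
    -- bound the even part
    have hfac : (1:ℝ) ≤ (Nat.factorial 1 : ℝ) * (Nat.factorial n : ℝ) := by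
      have : (1:ℝ) ≤ (Nat.factorial n : ℝ) := by
        exact_mod_cast Nat.one_le_iff_ne_zero.mpr (Nat.factorial_ne_zero n)
      simpa [Nat.factorial_one] using this
    have hK : ∀ ξ ∈ Set.uIoc s₁ s₂,
        ‖((y - η) ^ n / ((Nat.factorial 1 : ℝ) * (Nat.factorial n : ℝ)))
            * ((w (ξ, η) - w (x, η)) * (x - ξ))‖ ≤ h ^ n * (M * h * h) := by
      intro ξ hξ
      rw [uIoc_of_le (by rw [e₁, e₂]; linarith)] at hξ
      have hξmem : ξ ∈ Icc s₁ s₂ := ⟨hξ.1.le, hξ.2⟩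
      have hxmem : x ∈ Icc s₁ s₂ := by
        rw [e₁, e₂]; constructor <;> [linarith; linarith]
      have hlip : |w (ξ, η) - w (x, η)| ≤ M * |ξ - x| := by
        simp only [hw]
        exact lipA hα0 hs₁0 hS₀ (hSmin η hηy.le) hxmem hξmem
      have hbd1 : |ξ - x| ≤ h := by
        rw [e₁, e₂] at hξmem
        rw [abs_le]; constructor <;> [linarith [hξmem.1]; linarith [hξmem.2]]
      have hbd2 : |x - ξ| ≤ h := by rwa [abs_sub_comm]
      have habs1 : |(y - η) ^ n / ((Nat.factorial 1 : ℝ) * (Nat.factorial n : ℝ))| ≤ h ^ n := by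
        rw [abs_div, abs_of_nonneg (by linarith : (0:ℝ) ≤ (Nat.factorial 1 : ℝ) * (Nat.factorial n : ℝ))]
        have h1 : |y - η| ≤ h := by
          rw [abs_sub_comm, abs_of_nonneg (by linarith)]
          linarith
        calc |(y - η) ^ n| / ((Nat.factorial 1 : ℝ) * (Nat.factorial n : ℝ))
            ≤ |(y - η) ^ n| := div_le_self (abs_nonneg _) hfac
          _ ≤ h ^ n := by
              rw [abs_pow]
              exact pow_le_pow_left₀ (abs_nonneg _) h1 n
      rw [Real.norm_eq_abs, abs_mul, abs_mul]
      have inner : |w (ξ, η) - w (x, η)| * |x - ξ| ≤ (M * h) * h := by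
        apply mul_le_mul _ hbd2 (abs_nonneg _) (by positivity)
        calc |w (ξ, η) - w (x, η)| ≤ M * |ξ - x| := hlip
          _ ≤ M * h := mul_le_mul_of_nonneg_left hbd1 hMpos.le
      calc |(y - η) ^ n / ((Nat.factorial 1 : ℝ) * (Nat.factorial n : ℝ))|
            * (|w (ξ, η) - w (x, η)| * |x - ξ|)
          ≤ h ^ n * ((M * h) * h) :=
            mul_le_mul habs1 inner (by positivity) (by positivity)
        _ = h ^ n * (M * h * h) := by ring
    calc ‖∫ ξ in s₁..s₂, ((y - η) ^ n / ((Nat.factorial 1 : ℝ) * (Nat.factorial n : ℝ)))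
            * ((w (ξ, η) - w (x, η)) * (x - ξ))‖
        ≤ (h ^ n * (M * h * h)) * |s₂ - s₁| :=
          intervalIntegral.norm_integral_le_of_norm_le_const hK
      _ = 2 * M * h ^ (3 + n) := by
          rw [e₁, e₂, show x + h - (x - h) = 2 * h by ring,
            abs_of_nonneg (by linarith : (0:ℝ) ≤ 2 * h), pow_add]
          ring
  -- conclude
  have houter : ‖∫ η in dd..y,
      ((∫ ξ in s₁..x, w (ξ, η) * (x - ξ) ^ 1 * (y - η) ^ n /
          ((Nat.factorial 1 : ℝ) * (Nat.factorial n : ℝ)))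
        - ∫ ξ in s₂..x, w (ξ, η) * (x - ξ) ^ 1 * (y - η) ^ n /
          ((Nat.factorial 1 : ℝ) * (Nat.factorial n : ℝ)))‖
      ≤ (2 * M * h ^ (3 + n)) * |y - dd| :=
    intervalIntegral.norm_integral_le_of_norm_le_const hbound
  rw [Real.norm_eq_abs] at houter
  refine le_trans houter (le_of_eq ?_)
  have hyddabs : |y - dd| = h := by
    rw [abs_sub_comm, eh, abs_of_nonneg hh.le]
  rw [hyddabs, hM]
  have hS5 : S₀ ^ (-(1 + α) / 2) = (5:ℝ) ^ ((1 + α) / 2) * R ^ (-(1 + α) / 2) := by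
    rw [hS₀def, show (-(1 + α) / 2) = -((1 + α) / 2) by ring,
      Real.rpow_neg (by positivity), Real.rpow_neg hRpos.le,
      Real.div_rpow hRpos.le (by norm_num : (0:ℝ) ≤ 5), inv_div, div_eq_mul_inv]
  rw [hS5, pow_add, pow_add]
  ring
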